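/- Let p, k, q be positive integers with p − 2 ≥ k. If A is the adjacency matrix of the generalized pineapple graph K_{p,k}^q, then the matrix I + A has rank q + 2. -/

import Mathlib

/-- Adjacency matrix of the generalized pineapple graph `K_{p,k}^q`:
vertices `0,…,p-1` form a clique `K_p`, vertices `p,…,p+q-1` are independent,
and each independent vertex is joined to the `k` clique vertices `0,…,k-1`. -/
def pineappleAdj (p k q : ℕ) : Matrix (Fin (p + q)) (Fin (p + q)) ℚ :=
  fun i j =>
    if i = j then 0
    else if (i : ℕ) < p ∧ (j : ℕ) < p then 1
    else if (i : ℕ) < k ∨ (j : ℕ) < k then 1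
    else 0

open Matrix

/-- If `A` is the adjacency matrix of `K_{p,k}^q`, then `I + A` has rank `q + 2`. -/
theorem rank_one_add_pineappleAdj (p k q : ℕ) (hk : 0 < k) (hq : 0 < q)
    (hpk : k ≤ p - 2) (hp : 0 < p) :
    (1 + pineappleAdj p k q).rank = q + 2 := by
  classical
  have hkp : k + 2 ≤ p := by omega
  set B := 1 + pineappleAdj p k q with hB
  have hBval : ∀ i j : Fin (p + q), B i j =
      if (i : ℕ) = (j : ℕ) then 1
      else if (i : ℕ) < p ∧ (j : ℕ) < p then 1
      else if (i : ℕ) < k ∨ (j : ℕ) < k then 1 else 0 := by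
    intro i j
    by_cases h : i = j
    · subst h; simp [hB, pineappleAdj, Matrix.add_apply, Matrix.one_apply]
    · have h' : (i : ℕ) ≠ (j : ℕ) := fun hc => h (Fin.ext hc)
      simp [hB, pineappleAdj, Matrix.add_apply, Matrix.one_apply, h, h']
  -- the chosen column indices
  let g : Fin 2 ⊕ Fin q → Fin (p + q) := Sum.elim
    ![⟨0, by omega⟩, ⟨k, by omega⟩]
    (fun t => ⟨p + (t : ℕ), by have := t.isLt; omega⟩)
  -- every column of B equals a column at an index in the range of g
  have hcols : ∀ j : Fin (p + q), ∃ s, Bᵀ j = Bᵀ (g s) := by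
    intro j
    rcases lt_or_ge (j : ℕ) k with hj | hj
    · refine ⟨Sum.inl 0, funext fun i => ?_⟩
      simp only [Matrix.transpose_apply, hBval, g, Sum.elim_inl, Matrix.cons_val_zero, Fin.val_mk]
      split_ifs <;> first | omega | rfl
    rcases lt_or_ge (j : ℕ) p with hj2 | hj2
    · refine ⟨Sum.inl 1, funext fun i => ?_⟩
      simp only [Matrix.transpose_apply, hBval, g, Sum.elim_inl, Matrix.cons_val_one, Matrix.head_cons, Matrix.cons_val_zero, Fin.val_mk]
      split_ifs <;> first | omega | rfl
    · refine ⟨Sum.inr ⟨(j : ℕ) - p, by have := j.isLt; omega⟩, funext fun i => ?_⟩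
      simp only [Matrix.transpose_apply, hBval, g, Sum.elim_inr, Fin.val_mk]
      split_ifs <;> first | omega | rfl
  have hrange : Set.range Bᵀ = Set.range (Bᵀ ∘ g) := by
    ext x
    constructor
    · rintro ⟨j, rfl⟩
      obtain ⟨s, hs⟩ := hcols j
      exact ⟨s, hs.symm⟩
    · rintro ⟨s, rfl⟩
      exact ⟨g s, rfl⟩
  -- the columns at indices g s are linearly independent
  have hv0 : ∀ i : Fin (p + q), (Bᵀ ∘ g) (Sum.inl 0) i = 1 := by
    intro i
    dsimp only [Function.comp]
    simp only [Function.comp_apply, Matrix.transpose_apply, hBval, g, Sum.elim_inl, Matrix.cons_val_zero, Fin.val_mk]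
    split_ifs <;> first | omega | rfl
  have hv1 : ∀ i : Fin (p + q), (Bᵀ ∘ g) (Sum.inl 1) i =
      if (i : ℕ) < p then 1 else 0 := by
    intro i
    dsimp only [Function.comp]
    simp only [Function.comp_apply, Matrix.transpose_apply, hBval, g, Sum.elim_inl, Matrix.cons_val_one, Matrix.head_cons, Matrix.cons_val_zero, Fin.val_mk]
    split_ifs <;> first | omega | rfl
  have hv2 : ∀ (t : Fin q) (i : Fin (p + q)), (Bᵀ ∘ g) (Sum.inr t) i =
      (if (i : ℕ) < k then 1 else 0) + (if (i : ℕ) = p + (t : ℕ) then 1 else 0) := by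
    intro t i
    have := t.isLt
    dsimp only [Function.comp]
    simp only [Function.comp_apply, Matrix.transpose_apply, hBval, g, Sum.elim_inr, Fin.val_mk]
    split_ifs <;> first | omega | norm_num
  have hli : LinearIndependent ℚ (Bᵀ ∘ g) := by
    rw [Fintype.linearIndependent_iff]
    intro c hc
    have h0 : ∀ i : Fin (p + q), (∑ s, c s • (Bᵀ ∘ g) s) i = 0 := by
      intro i; rw [hc]; rfl
    have hsum : ∀ i : Fin (p + q), c (Sum.inl 0) * (Bᵀ ∘ g) (Sum.inl 0) i
        + c (Sum.inl 1) * (Bᵀ ∘ g) (Sum.inl 1) i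
        + ∑ t : Fin q, c (Sum.inr t) * (Bᵀ ∘ g) (Sum.inr t) i = 0 := by
      intro i
      have := h0 i
      simpa [Finset.sum_apply, Fintype.sum_sum_type, Fin.sum_univ_two, add_assoc] using this
    -- evaluate at k
    have Ek : c (Sum.inl 0) + c (Sum.inl 1) = 0 := by
      have h := hsum ⟨k, by omega⟩
      have hne : ∀ t : Fin q, ¬ ((k : ℕ) = p + (t : ℕ)) := fun t => by omega
      simp only [hv0, hv1, hv2] at h
      simpa [hne, show k < p by omega] using h
    -- evaluate at 0
    have E0 : c (Sum.inl 0) + c (Sum.inl 1) + ∑ t : Fin q, c (Sum.inr t) = 0 := by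
      have h := hsum ⟨0, by omega⟩
      have hne : ∀ t : Fin q, ¬ ((0 : ℕ) = p + (t : ℕ)) := fun t => by omega
      simp only [hv0, hv1, hv2] at h
      simpa [hne, hp, hk] using h
    -- evaluate at p + t
    have Et : ∀ t : Fin q, c (Sum.inl 0) + c (Sum.inr t) = 0 := by
      intro t
      have ht := t.isLt
      have h := hsum ⟨p + (t : ℕ), by omega⟩
      have heq : ∀ t' : Fin q, (p + (t : ℕ) = p + (t' : ℕ)) ↔ t' = t := by
        intro t'
        constructor
        · intro hh; exact Fin.ext (by omega)
        · rintro rfl; rfl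
      simp only [hv0, hv1, hv2] at h
      simp only [show ¬ (p + (t : ℕ) < p) by omega, show ¬ (p + (t : ℕ) < k) by omega,
        if_false, heq, mul_one, mul_zero, zero_add, mul_ite, add_zero] at h
      rwa [Finset.sum_ite_eq' Finset.univ t (fun t' => c (Sum.inr t')),
        if_pos (Finset.mem_univ t)] at h
    have hsumc : ∑ t : Fin q, c (Sum.inr t) = - (q : ℚ) * c (Sum.inl 0) := by
      have : ∀ t : Fin q, c (Sum.inr t) = - c (Sum.inl 0) := fun t => by
        have := Et t; linarith
      rw [Finset.sum_congr rfl fun t _ => this t]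
      simp [Finset.card_univ]
      try ring
    have ha : c (Sum.inl 0) = 0 := by
      have hq' : (q : ℚ) ≠ 0 := Nat.cast_ne_zero.2 (by omega)
      rw [hsumc] at E0
      have h2 : (q : ℚ) * c (Sum.inl 0) = 0 := by linarith
      rcases mul_eq_zero.mp h2 with h | h
      · exact absurd h hq'
      · exact h
    rintro (a | t)
    · have h2 := a.isLt
      have : a = 0 ∨ a = 1 := by
        rcases (by omega : (a : ℕ) = 0 ∨ (a : ℕ) = 1) with h | h
        · exact Or.inl (Fin.ext h)
        · exact Or.inr (Fin.ext h)
      rcases this with rfl | rfl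
      · exact ha
      · linarith [Ek]
    · linarith [Et t]
  rw [Matrix.rank_eq_finrank_span_cols, Matrix.col_def, hrange, finrank_span_eq_card hli]
  simp [Fintype.card_sum]
  omega
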